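/- arXiv:1301.3962 — 4 statements merged into one kernel-verified Lean document; each statement's English description precedes it below -/
import Mathlib

section
/- In Y_R(so_3), the RTT relation is equivalent to the relations [t_{pq}(u), t'_{rs}(v)] = (1/(u-v-1/2))(t'_{r,-p}(v)t_{-s,q}(u) - t_{p,-r}(u)t'_{-q,s}(v)) + (1/(u-v))(δ_{qr} Σ_{i=-1}^{1} t_{pi}(u)t'_{is}(v) - δ_{ps} Σ_{i=-1}^{1} t'_{ri}(v)t_{iq}(u)), where t'_{ij}(u) are the entries of T(u)^{-1}. -/
noncomputable section

/-- Two-variable formal series ring: Laurent-type series in `u⁻¹` (outer) over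
Laurent-type series in `v⁻¹` (inner) with coefficients in `A`.  In this ring both
variables `u`, `v` and differences such as `u - v`, `u - v - 1/2` make sense. -/
abbrev KK (A : Type) [Ring A] : Type := HahnSeries ℤ (HahnSeries ℤ A)

variable {A : Type} [Ring A]

/-- embed a series `a(u) = ∑_{n≥0} a_n u^{-n}` (u = outer variable) -/
def su (a : ℕ → A) : KK A :=
  HahnSeries.ofPowerSeries ℤ (HahnSeries ℤ A) (PowerSeries.mk (fun n => HahnSeries.C (a n)))

/-- embed a series `a(v) = ∑_{n≥0} a_n v^{-n}` (v = inner variable) -/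
def sv (a : ℕ → A) : KK A :=
  HahnSeries.C (HahnSeries.ofPowerSeries ℤ A (PowerSeries.mk a))

/-- the variable `u` -/
def Uu : KK A := HahnSeries.single (-1 : ℤ) 1
/-- the variable `v` -/
def Vv : KK A := HahnSeries.C (HahnSeries.single (-1 : ℤ) 1)

/-- constants -/
def cA (a : A) : KK A := HahnSeries.C (HahnSeries.C a)

/-- coefficients of the shifted series `a(u+c)`, using
`(u+c)^{-r} = ∑_{j≥0} (-1)^j C(r-1+j,j) c^j u^{-r-j}`. -/
def shPow [Algebra ℚ A] (c : ℚ) (a : ℕ → A) : ℕ → A :=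
  fun m => ∑ r ∈ Finset.range (m + 1),
    (algebraMap ℚ A ((-c) ^ (m - r) * ((m - 1).choose (m - r) : ℚ))) * a r

/-- the central scalar 1/2 = κ -/
def half [Algebra ℚ A] : KK A := cA (algebraMap ℚ A (1/2))

/-- Kronecker delta in `KK A` -/
def kd {ι : Type} [DecidableEq ι] (i j : ι) : KK A := if i = j then 1 else 0



lemma single_one_comm {R : Type*} [Ring R] (b : ℤ) (x : HahnSeries ℤ R) :
    HahnSeries.single b (1:R) * x = x * HahnSeries.single b 1 := by
  ext n
  have h1 : (HahnSeries.single b (1:R) * x).coeff ((n - b) + b) = 1 * x.coeff (n-b) :=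
    HahnSeries.coeff_single_mul_add
  have h2 : (x * HahnSeries.single b (1:R)).coeff ((n - b) + b) = x.coeff (n-b) * 1 :=
    HahnSeries.coeff_mul_single_add
  rw [sub_add_cancel] at h1 h2
  rw [h1, h2, one_mul, mul_one]

lemma C_central_comm {R : Type*} [Ring R] {c : R} (hc : ∀ y : R, c * y = y * c)
    (x : HahnSeries ℤ R) : HahnSeries.C c * x = x * HahnSeries.C c := by
  ext n
  rw [HahnSeries.C_apply, HahnSeries.coeff_single_zero_mul, HahnSeries.coeff_mul_single_zero, hc]

section Abstract
variable {B : Type} [Ring B]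

/-- Kronecker delta in B -/
def ed (i j : Fin 3) : B := if i = j then 1 else 0

lemma ed_symm (i j : Fin 3) : (ed i j : B) = ed j i := by
  simp only [ed, eq_comm]

lemma ed_comm (i j : Fin 3) (x : B) : ed i j * x = x * ed i j := by
  unfold ed; split <;> simp

lemma sum_mul_ed (f : Fin 3 → B) (s : Fin 3) : ∑ k, f k * ed k s = f s := by
  simp [ed, mul_ite, Finset.sum_ite_eq']

lemma ed_mul_sum (f : Fin 3 → B) (r : Fin 3) : ∑ k, ed r k * f k = f r := by
  simp [ed, ite_mul, Finset.sum_ite_eq]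

lemma ed_rev_left (k s : Fin 3) : (ed k.rev s : B) = ed k s.rev := by
  unfold ed
  rcases eq_or_ne k s.rev with rfl | h
  · simp [Fin.rev_rev]
  · rw [if_neg (fun hh => h (by rw [← hh, Fin.rev_rev])), if_neg h]

lemma ed_rev_right (r k : Fin 3) : (ed r k.rev : B) = ed r.rev k := by
  rw [ed_symm, ed_rev_left, ed_symm]

lemma sum_mul_ed_rev (f : Fin 3 → B) (s : Fin 3) : ∑ k, f k * ed k.rev s = f s.rev := by
  simp only [ed_rev_left]
  exact sum_mul_ed f s.rev

lemma sum_ed_rev_mul (f : Fin 3 → B) (r : Fin 3) : ∑ k, ed r k.rev * f k = f r.rev := by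
  simp only [ed_rev_right]
  exact ed_mul_sum f r.rev

lemma sum_rev (f : Fin 3 → B) : ∑ k : Fin 3, f k.rev = ∑ k : Fin 3, f k :=
  Fintype.sum_equiv Fin.revPerm _ _ (fun _ => rfl)

end Abstract

section Collapse
variable {B : Type} [Ring B]

lemma sum_mul_ed2 (f : Fin 3 → B) (s : Fin 3) : ∑ k, f k * ed s k = f s := by
  simp [ed, mul_ite, Finset.sum_ite_eq]

lemma sum_ed_mul (f : Fin 3 → B) (s : Fin 3) : ∑ k, ed k s * f k = f s := by
  simp [ed, ite_mul, Finset.sum_ite_eq']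

lemma rev_reindex (g h : Fin 3 → B) :
    ∑ s : Fin 3, g s.rev * h s = ∑ m : Fin 3, g m * h m.rev := by
  have h1 := sum_rev (fun s : Fin 3 => g s.rev * h s)
  simp only [Fin.rev_rev] at h1
  exact h1.symm

lemma rev_reindex' (g h : Fin 3 → B) :
    ∑ s : Fin 3, g s * h s.rev = ∑ m : Fin 3, g m.rev * h m := by
  have h1 := sum_rev (fun s : Fin 3 => g s * h s.rev)
  simp only [Fin.rev_rev] at h1
  exact h1.symm

variable (Y Y' : Fin 3 → Fin 3 → B)
variable (hYY' : ∀ i j, ∑ p, Y i p * Y' p j = (ed i j : B))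
variable (hY'Y : ∀ i j, ∑ p, Y' i p * Y p j = (ed i j : B))

section PP
include hYY' hY'Y

lemma P1 (x : B) (r s : Fin 3) :
    ∑ k, ∑ l, Y' r k * (x * Y k l) * Y' l s = Y' r s * x := by
  calc ∑ k, ∑ l, Y' r k * (x * Y k l) * Y' l s
      = ∑ k, (Y' r k * x) * ∑ l, Y k l * Y' l s := by
        refine Finset.sum_congr rfl fun k _ => ?_
        rw [Finset.mul_sum]
        exact Finset.sum_congr rfl fun l _ => by simp only [mul_assoc]
    _ = ∑ k, (Y' r k * x) * ed k s := by simp only [hYY']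
    _ = Y' r s * x := sum_mul_ed _ s

lemma P2 (x : B) (r s : Fin 3) :
    ∑ k, ∑ l, Y' r k * (Y k l * x) * Y' l s = x * Y' r s := by
  rw [Finset.sum_comm]
  calc ∑ l, ∑ k, Y' r k * (Y k l * x) * Y' l s
      = ∑ l, (∑ k, Y' r k * Y k l) * (x * Y' l s) := by
        refine Finset.sum_congr rfl fun l _ => ?_
        rw [Finset.sum_mul]
        exact Finset.sum_congr rfl fun k _ => by simp only [mul_assoc]
    _ = ∑ l, ed r l * (x * Y' l s) := by simp only [hY'Y]
    _ = x * Y' r s := ed_mul_sum _ r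

lemma P3 (g : Fin 3 → B) (p r s : Fin 3) :
    ∑ k, ∑ l, Y' r k * (g k * Y p l) * Y' l s = ed p s * ∑ k, Y' r k * g k := by
  calc ∑ k, ∑ l, Y' r k * (g k * Y p l) * Y' l s
      = ∑ k, (Y' r k * g k) * ∑ l, Y p l * Y' l s := by
        refine Finset.sum_congr rfl fun k _ => ?_
        rw [Finset.mul_sum]
        exact Finset.sum_congr rfl fun l _ => by simp only [mul_assoc]
    _ = ∑ k, (Y' r k * g k) * ed p s := by simp only [hYY']
    _ = (∑ k, Y' r k * g k) * ed p s := by rw [Finset.sum_mul]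
    _ = ed p s * ∑ k, Y' r k * g k := (ed_comm _ _ _).symm

lemma P4 (g : Fin 3 → B) (q r s : Fin 3) :
    ∑ k, ∑ l, Y' r k * (Y k q * g l) * Y' l s = ed q r * ∑ l, g l * Y' l s := by
  rw [Finset.sum_comm]
  calc ∑ l, ∑ k, Y' r k * (Y k q * g l) * Y' l s
      = ∑ l, (∑ k, Y' r k * Y k q) * (g l * Y' l s) := by
        refine Finset.sum_congr rfl fun l _ => ?_
        rw [Finset.sum_mul]
        exact Finset.sum_congr rfl fun k _ => by simp only [mul_assoc]
    _ = ∑ l, ed r q * (g l * Y' l s) := by simp only [hY'Y]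
    _ = ed r q * ∑ l, g l * Y' l s := by rw [Finset.mul_sum]
    _ = ed q r * ∑ l, g l * Y' l s := by rw [ed_symm]

lemma colP5 (g : Fin 3 → B) (s : Fin 3) :
    ∑ l, (∑ m, g m * Y m.rev l) * Y' l s = g s.rev := by
  calc ∑ l, (∑ m, g m * Y m.rev l) * Y' l s
      = ∑ l, ∑ m, g m * (Y m.rev l * Y' l s) := by
        refine Finset.sum_congr rfl fun l _ => ?_
        rw [Finset.sum_mul]
        exact Finset.sum_congr rfl fun m _ => by simp only [mul_assoc]
    _ = ∑ m, g m * ∑ l, Y m.rev l * Y' l s := by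
        rw [Finset.sum_comm]
        exact Finset.sum_congr rfl fun m _ => by rw [Finset.mul_sum]
    _ = ∑ m, g m * ed m.rev s := by simp only [hYY']
    _ = g s.rev := sum_mul_ed_rev _ s

lemma P5 (g : Fin 3 → B) (p' r s : Fin 3) :
    ∑ k, ∑ l, Y' r k * (ed k p' * ∑ m, g m * Y m.rev l) * Y' l s
      = Y' r p' * g s.rev := by
  calc ∑ k, ∑ l, Y' r k * (ed k p' * ∑ m, g m * Y m.rev l) * Y' l s
      = ∑ k, ∑ l, (Y' r k * ed k p') * ((∑ m, g m * Y m.rev l) * Y' l s) := by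
        refine Finset.sum_congr rfl fun k _ => Finset.sum_congr rfl fun l _ => by
          simp only [mul_assoc]
    _ = (∑ k, Y' r k * ed k p') * ∑ l, (∑ m, g m * Y m.rev l) * Y' l s :=
        (Fintype.sum_mul_sum _ _).symm
    _ = Y' r p' * ∑ l, (∑ m, g m * Y m.rev l) * Y' l s := by rw [sum_mul_ed]
    _ = Y' r p' * g s.rev := by rw [colP5 Y Y' hYY' hY'Y]

lemma colP6 (g : Fin 3 → B) (r : Fin 3) :
    ∑ k, Y' r k * ∑ m, Y k m.rev * g m = g r.rev := by
  calc ∑ k, Y' r k * ∑ m, Y k m.rev * g m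
      = ∑ k, ∑ m, (Y' r k * Y k m.rev) * g m := by
        refine Finset.sum_congr rfl fun k _ => ?_
        rw [Finset.mul_sum]
        exact Finset.sum_congr rfl fun m _ => by simp only [mul_assoc]
    _ = ∑ m, (∑ k, Y' r k * Y k m.rev) * g m := by
        rw [Finset.sum_comm]
        exact Finset.sum_congr rfl fun m _ => by rw [Finset.sum_mul]
    _ = ∑ m, ed r m.rev * g m := by simp only [hY'Y]
    _ = g r.rev := sum_ed_rev_mul _ r

lemma P6 (g : Fin 3 → B) (q' r s : Fin 3) :
    ∑ k, ∑ l, Y' r k * (ed l q' * ∑ m, Y k m.rev * g m) * Y' l s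
      = g r.rev * Y' q' s := by
  calc ∑ k, ∑ l, Y' r k * (ed l q' * ∑ m, Y k m.rev * g m) * Y' l s
      = ∑ k, ∑ l, (Y' r k * ∑ m, Y k m.rev * g m) * (ed l q' * Y' l s) := by
        refine Finset.sum_congr rfl fun k _ => Finset.sum_congr rfl fun l _ => ?_
        rw [ed_comm l q']
        simp only [mul_assoc]
    _ = (∑ k, Y' r k * ∑ m, Y k m.rev * g m) * ∑ l, ed l q' * Y' l s :=
        (Fintype.sum_mul_sum _ _).symm
    _ = g r.rev * ∑ l, ed l q' * Y' l s := by rw [colP6 Y Y' hYY' hY'Y]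
    _ = g r.rev * Y' q' s := by rw [sum_ed_mul]

lemma Q3 (g : Fin 3 → B) (i' k l : Fin 3) :
    ∑ r, ∑ s, Y k r * (Y' r i' * g s.rev) * Y s l
      = ed k i' * ∑ m, g m * Y m.rev l := by
  calc ∑ r, ∑ s, Y k r * (Y' r i' * g s.rev) * Y s l
      = ∑ r, ∑ s, (Y k r * Y' r i') * (g s.rev * Y s l) := by
        refine Finset.sum_congr rfl fun r _ => Finset.sum_congr rfl fun s _ => by
          simp only [mul_assoc]
    _ = (∑ r, Y k r * Y' r i') * ∑ s, g s.rev * Y s l :=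
        (Fintype.sum_mul_sum _ _).symm
    _ = ed k i' * ∑ s, g s.rev * Y s l := by rw [hYY']
    _ = ed k i' * ∑ m, g m * Y m.rev l := by rw [rev_reindex]

lemma Q4 (g : Fin 3 → B) (j' k l : Fin 3) :
    ∑ r, ∑ s, Y k r * (g r.rev * Y' j' s) * Y s l
      = ed l j' * ∑ m, Y k m.rev * g m := by
  calc ∑ r, ∑ s, Y k r * (g r.rev * Y' j' s) * Y s l
      = ∑ r, ∑ s, (Y k r * g r.rev) * (Y' j' s * Y s l) := by
        refine Finset.sum_congr rfl fun r _ => Finset.sum_congr rfl fun s _ => by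
          simp only [mul_assoc]
    _ = (∑ r, Y k r * g r.rev) * ∑ s, Y' j' s * Y s l :=
        (Fintype.sum_mul_sum _ _).symm
    _ = (∑ m, Y k m.rev * g m) * ed j' l := by rw [hY'Y, rev_reindex']
    _ = ed l j' * ∑ m, Y k m.rev * g m := by rw [← ed_comm, ed_symm]

lemma Q5 (g : Fin 3 → B) (j k l : Fin 3) :
    ∑ r, ∑ s, Y k r * (ed j r * ∑ m, g m * Y' m s) * Y s l = Y k j * g l := by
  calc ∑ r, ∑ s, Y k r * (ed j r * ∑ m, g m * Y' m s) * Y s l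
      = ∑ r, ∑ s, (Y k r * ed j r) * ((∑ m, g m * Y' m s) * Y s l) := by
        refine Finset.sum_congr rfl fun r _ => Finset.sum_congr rfl fun s _ => by
          simp only [mul_assoc]
    _ = (∑ r, Y k r * ed j r) * ∑ s, (∑ m, g m * Y' m s) * Y s l :=
        (Fintype.sum_mul_sum _ _).symm
    _ = Y k j * ∑ s, (∑ m, g m * Y' m s) * Y s l := by rw [sum_mul_ed2]
    _ = Y k j * g l := by
        congr 1
        calc ∑ s, (∑ m, g m * Y' m s) * Y s l
            = ∑ s, ∑ m, g m * (Y' m s * Y s l) := by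
              refine Finset.sum_congr rfl fun s _ => ?_
              rw [Finset.sum_mul]
              exact Finset.sum_congr rfl fun m _ => by simp only [mul_assoc]
          _ = ∑ m, g m * ∑ s, Y' m s * Y s l := by
              rw [Finset.sum_comm]
              exact Finset.sum_congr rfl fun m _ => by rw [Finset.mul_sum]
          _ = ∑ m, g m * ed m l := by simp only [hY'Y]
          _ = g l := sum_mul_ed _ l

lemma Q6 (g : Fin 3 → B) (i k l : Fin 3) :
    ∑ r, ∑ s, Y k r * (ed i s * ∑ m, Y' r m * g m) * Y s l = g k * Y i l := by
  calc ∑ r, ∑ s, Y k r * (ed i s * ∑ m, Y' r m * g m) * Y s l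
      = ∑ r, ∑ s, (Y k r * ∑ m, Y' r m * g m) * (ed i s * Y s l) := by
        refine Finset.sum_congr rfl fun r _ => Finset.sum_congr rfl fun s _ => ?_
        rw [ed_comm i s]
        simp only [mul_assoc]
    _ = (∑ r, Y k r * ∑ m, Y' r m * g m) * ∑ s, ed i s * Y s l :=
        (Fintype.sum_mul_sum _ _).symm
    _ = (∑ r, Y k r * ∑ m, Y' r m * g m) * Y i l := by rw [ed_mul_sum]
    _ = g k * Y i l := by
        congr 1
        calc ∑ r, Y k r * ∑ m, Y' r m * g m
            = ∑ r, ∑ m, (Y k r * Y' r m) * g m := by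
              refine Finset.sum_congr rfl fun r _ => ?_
              rw [Finset.mul_sum]
              exact Finset.sum_congr rfl fun m _ => by simp only [mul_assoc]
          _ = ∑ m, (∑ r, Y k r * Y' r m) * g m := by
              rw [Finset.sum_comm]
              exact Finset.sum_congr rfl fun m _ => by rw [Finset.sum_mul]
          _ = ∑ m, ed k m * g m := by simp only [hYY']
          _ = g k := ed_mul_sum _ k

end PP
end Collapse

section Key
set_option linter.unusedSectionVars false
variable {B : Type} [Ring B]
variable (X Y Y' : Fin 3 → Fin 3 → B) (α β : B)

lemma central_move {c : B} (hc : ∀ y : B, c * y = y * c) (a x b : B) :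
    a * (c * x) * b = c * (a * x * b) := by
  rw [show a * (c * x) = c * (a * x) from by rw [← mul_assoc, ← hc a, mul_assoc],
    mul_assoc, mul_assoc]

lemma key1
    (hα : ∀ x : B, α * x = x * α) (hβ : ∀ x : B, β * x = x * β)
    (hYY' : ∀ i j, ∑ p, Y i p * Y' p j = (ed i j : B))
    (hY'Y : ∀ i j, ∑ p, Y' i p * Y p j = (ed i j : B))
    (p q r s : Fin 3) :
    α * β * (X p q * Y' r s - Y' r s * X p q)
      - (α * (Y' r p.rev * X s.rev q - X p r.rev * Y' q.rev s)
         + β * (ed q r * ∑ i, X p i * Y' i s - ed p s * ∑ i, Y' r i * X i q))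
    = - ∑ k, ∑ l, Y' r k *
        ((α * β * (X p q * Y k l - Y k l * X p q))
         - (β * (X k q * Y p l - Y k q * X p l)
            - α * (ed k p.rev * ∑ m, X m q * Y m.rev l
                   - ed l q.rev * ∑ m, Y k m.rev * X p m)))
        * Y' l s := by
  have hαβ : ∀ y : B, (α * β) * y = y * (α * β) := fun y => by
    rw [mul_assoc, hβ, ← mul_assoc, hα, mul_assoc]
  have hmAB := central_move (c := α * β) hαβ
  have hmA := central_move (c := α) hα
  have hmB := central_move (c := β) hβ
  have expand : (∑ k, ∑ l, Y' r k *
        ((α * β * (X p q * Y k l - Y k l * X p q))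
         - (β * (X k q * Y p l - Y k q * X p l)
            - α * (ed k p.rev * ∑ m, X m q * Y m.rev l
                   - ed l q.rev * ∑ m, Y k m.rev * X p m)))
        * Y' l s)
      = α * β * (∑ k, ∑ l, Y' r k * (X p q * Y k l) * Y' l s)
        - α * β * (∑ k, ∑ l, Y' r k * (Y k l * X p q) * Y' l s)
        - (β * (∑ k, ∑ l, Y' r k * (X k q * Y p l) * Y' l s)
           - β * (∑ k, ∑ l, Y' r k * (Y k q * X p l) * Y' l s)
           - (α * (∑ k, ∑ l, Y' r k * (ed k p.rev * ∑ m, X m q * Y m.rev l) * Y' l s)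
              - α * (∑ k, ∑ l, Y' r k * (ed l q.rev * ∑ m, Y k m.rev * X p m) * Y' l s))) := by
    simp only [mul_sub, sub_mul, hmAB, hmA, hmB, Finset.sum_sub_distrib, ← Finset.mul_sum]
  rw [expand, P1 Y Y' hYY' hY'Y, P2 Y Y' hYY' hY'Y,
    P3 Y Y' hYY' hY'Y (fun k => X k q) p r s,
    P4 Y Y' hYY' hY'Y (fun l => X p l) q r s,
    P5 Y Y' hYY' hY'Y (fun m => X m q) p.rev r s,
    P6 Y Y' hYY' hY'Y (fun m => X p m) q.rev r s]
  simp only [mul_sub]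
  abel

lemma key2
    (hα : ∀ x : B, α * x = x * α) (hβ : ∀ x : B, β * x = x * β)
    (hYY' : ∀ i j, ∑ p, Y i p * Y' p j = (ed i j : B))
    (hY'Y : ∀ i j, ∑ p, Y' i p * Y p j = (ed i j : B))
    (i j k l : Fin 3) :
    α * β * (X i j * Y k l - Y k l * X i j)
      - (β * (X k j * Y i l - Y k j * X i l)
         - α * (ed k i.rev * ∑ p, X p j * Y p.rev l
                - ed l j.rev * ∑ p, Y k p.rev * X i p))
    = - ∑ r, ∑ s, Y k r *
        ((α * β * (X i j * Y' r s - Y' r s * X i j))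
         - (α * (Y' r i.rev * X s.rev j - X i r.rev * Y' j.rev s)
            + β * (ed j r * ∑ m, X i m * Y' m s - ed i s * ∑ m, Y' r m * X m j)))

        * Y s l := by
  have hαβ : ∀ y : B, (α * β) * y = y * (α * β) := fun y => by
    rw [mul_assoc, hβ, ← mul_assoc, hα, mul_assoc]
  have hmAB := central_move (c := α * β) hαβ
  have hmA := central_move (c := α) hα
  have hmB := central_move (c := β) hβ
  have expand : (∑ r, ∑ s, Y k r *
        ((α * β * (X i j * Y' r s - Y' r s * X i j))
         - (α * (Y' r i.rev * X s.rev j - X i r.rev * Y' j.rev s)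
            + β * (ed j r * ∑ m, X i m * Y' m s - ed i s * ∑ m, Y' r m * X m j)))
        * Y s l)
      = α * β * (∑ r, ∑ s, Y k r * (X i j * Y' r s) * Y s l)
        - α * β * (∑ r, ∑ s, Y k r * (Y' r s * X i j) * Y s l)
        - (α * (∑ r, ∑ s, Y k r * (Y' r i.rev * X s.rev j) * Y s l)
           - α * (∑ r, ∑ s, Y k r * (X i r.rev * Y' j.rev s) * Y s l)
           + (β * (∑ r, ∑ s, Y k r * (ed j r * ∑ m, X i m * Y' m s) * Y s l)
              - β * (∑ r, ∑ s, Y k r * (ed i s * ∑ m, Y' r m * X m j) * Y s l))) := by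
    simp only [mul_sub, sub_mul, mul_add, add_mul, hmAB, hmA, hmB,
      Finset.sum_sub_distrib, Finset.sum_add_distrib, ← Finset.mul_sum]
  rw [expand, P1 Y' Y hY'Y hYY' (X i j) k l, P2 Y' Y hY'Y hYY' (X i j) k l,
    Q3 Y Y' hYY' hY'Y (fun m => X m j) i.rev k l,
    Q4 Y Y' hYY' hY'Y (fun m => X i m) j.rev k l,
    Q5 Y Y' hYY' hY'Y (fun m => X i m) j k l,
    Q6 Y Y' hYY' hY'Y (fun m => X m j) i k l]
  simp only [mul_sub]
  abel

end Key

section MainAbstract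
variable {B : Type} [Ring B]

theorem abstract_iff (X Y Y' : Fin 3 → Fin 3 → B) (α β : B)
    (hα : ∀ x : B, α * x = x * α) (hβ : ∀ x : B, β * x = x * β)
    (hYY' : ∀ i j, ∑ p, Y i p * Y' p j = (ed i j : B))
    (hY'Y : ∀ i j, ∑ p, Y' i p * Y p j = (ed i j : B)) :
    (∀ i j k l : Fin 3,
      α * β * (X i j * Y k l - Y k l * X i j) =
        β * (X k j * Y i l - Y k j * X i l) -
        α * (ed k i.rev * ∑ p, X p j * Y p.rev l -
             ed l j.rev * ∑ p, Y k p.rev * X i p)) ↔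
    (∀ p q r s : Fin 3,
      α * β * (X p q * Y' r s - Y' r s * X p q) =
        α * (Y' r p.rev * X s.rev q - X p r.rev * Y' q.rev s) +
        β * (ed q r * ∑ i, X p i * Y' i s -
             ed p s * ∑ i, Y' r i * X i q)) := by
  constructor
  · intro h p q r s
    have hk := key1 X Y Y' α β hα hβ hYY' hY'Y p q r s
    simp only [h, sub_self, mul_zero, zero_mul, Finset.sum_const_zero, neg_zero] at hk
    exact sub_eq_zero.mp hk
  · intro h i j k l
    have hk := key2 X Y Y' α β hα hβ hYY' hY'Y i j k l
    simp only [h, sub_self, mul_zero, zero_mul, Finset.sum_const_zero, neg_zero] at hk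
    exact sub_eq_zero.mp hk

end MainAbstract

section Transfer
variable {A : Type} [Ring A]

lemma mapC_mk (a : ℕ → A) :
    PowerSeries.map (HahnSeries.C : A →+* HahnSeries ℤ A) (PowerSeries.mk a)
      = PowerSeries.mk (fun n => HahnSeries.C (a n)) := by
  ext n
  rw [PowerSeries.coeff_map, PowerSeries.coeff_mk, PowerSeries.coeff_mk]

lemma su_eq (a : ℕ → A) : su a = HahnSeries.ofPowerSeries ℤ (HahnSeries ℤ A)
    (PowerSeries.map (HahnSeries.C : A →+* HahnSeries ℤ A) (PowerSeries.mk a)) := by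
  rw [mapC_mk, su]

lemma sv_eq (a : ℕ → A) :
    (HahnSeries.C (HahnSeries.ofPowerSeries ℤ A (PowerSeries.mk a)) : KK A) = sv a := rfl

lemma psmap_inj {R S : Type*} [Semiring R] [Semiring S] (f : R →+* S)
    (hf : Function.Injective f) : Function.Injective (PowerSeries.map f) := by
  intro x y h
  ext n
  apply hf
  rw [← PowerSeries.coeff_map, ← PowerSeries.coeff_map, h]

lemma transfer (a b : Fin 3 → Fin 3 → ℕ → A)
    (h : ∀ i j : Fin 3, ∑ p : Fin 3, su (a i p) * su (b p j) = kd i j) :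
    ∀ i j : Fin 3, ∑ p : Fin 3, sv (a i p) * sv (b p j) = (ed i j : KK A) := by
  have key : ∀ i j : Fin 3, ∑ p : Fin 3,
      PowerSeries.mk (a i p) * PowerSeries.mk (b p j)
        = (if i = j then 1 else 0 : PowerSeries A) := by
    intro i j
    apply psmap_inj (HahnSeries.C : A →+* HahnSeries ℤ A) HahnSeries.C_injective
    apply HahnSeries.ofPowerSeries_injective (Γ := ℤ)
    rw [map_sum, map_sum]
    simp only [map_mul, ← su_eq]
    rw [h i j, kd]
    split <;> simp
  intro i j
  have h2 : (HahnSeries.C (HahnSeries.ofPowerSeries ℤ A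
        (∑ p : Fin 3, PowerSeries.mk (a i p) * PowerSeries.mk (b p j))) : KK A)
      = HahnSeries.C (HahnSeries.ofPowerSeries ℤ A
          (if i = j then 1 else 0 : PowerSeries A)) := by rw [key i j]
  rw [map_sum, map_sum] at h2
  simp only [map_mul, sv_eq] at h2
  rw [h2, ed]
  split <;> simp

end Transfer


/-- given that `T'(v) = T(v)⁻¹` (entrywise two-sided inverse), the
entrywise RTT relation is equivalent to the mixed relations
`(u-v)(u-v-1/2)[t_{pq}(u),t'_{rs}(v)] = (u-v)(t'_{r,-p}(v)t_{-s,q}(u) - t_{p,-r}(u)t'_{-q,s}(v))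
 + (u-v-1/2)(δ_{qr} ∑_i t_{pi}(u)t'_{is}(v) - δ_{ps} ∑_i t'_{ri}(v)t_{iq}(u))`
(indices `-1,0,1` are encoded as `0,1,2 : Fin 3`, with negation `Fin.rev`). -/
theorem stmt3 (A : Type) [Ring A] [Algebra ℚ A]
    (t t' : Fin 3 → Fin 3 → ℕ → A)
    (ht0 : ∀ i j, t i j 0 = if i = j then 1 else 0)
    (hinv₁ : ∀ i j : Fin 3, ∑ p : Fin 3, su (t i p) * su (t' p j) = kd i j)
    (hinv₂ : ∀ i j : Fin 3, ∑ p : Fin 3, su (t' i p) * su (t p j) = kd i j) :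
    (∀ i j k l : Fin 3,
      (Uu - Vv) * (Uu - Vv - half) * (su (t i j) * sv (t k l) - sv (t k l) * su (t i j)) =
        (Uu - Vv - half) * (su (t k j) * sv (t i l) - sv (t k j) * su (t i l)) -
        (Uu - Vv) * (kd k i.rev * ∑ p : Fin 3, su (t p j) * sv (t p.rev l) -
                     kd l j.rev * ∑ p : Fin 3, sv (t k p.rev) * su (t i p))) ↔
    (∀ p q r s : Fin 3,
      (Uu - Vv) * (Uu - Vv - half) * (su (t p q) * sv (t' r s) - sv (t' r s) * su (t p q)) =
        (Uu - Vv) * (sv (t' r p.rev) * su (t s.rev q) - su (t p r.rev) * sv (t' q.rev s)) +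
        (Uu - Vv - half) * (kd q r * ∑ i : Fin 3, su (t p i) * sv (t' i s) -
                            kd p s * ∑ i : Fin 3, sv (t' r i) * su (t i q))) := by
  have hU : ∀ x : KK A, Uu * x = x * Uu := fun x => single_one_comm _ x
  have hV : ∀ x : KK A, Vv * x = x * Vv := fun x =>
    C_central_comm (fun y => single_one_comm _ y) x
  have hH : ∀ x : KK A, half * x = x * half := fun x =>
    C_central_comm (fun y => C_central_comm (fun z => (Algebra.commutes (1/2 : ℚ) z)) y) x
  have hα : ∀ x : KK A, (Uu - Vv) * x = x * (Uu - Vv) := fun x =>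
    calc (Uu - Vv) * x = Uu * x - Vv * x := sub_mul Uu Vv x
      _ = x * Uu - x * Vv := by rw [hU, hV]
      _ = x * (Uu - Vv) := (mul_sub x Uu Vv).symm
  have hβ : ∀ x : KK A, (Uu - Vv - half) * x = x * (Uu - Vv - half) := fun x =>
    calc (Uu - Vv - half) * x = (Uu - Vv) * x - half * x := sub_mul _ _ x
      _ = x * (Uu - Vv) - x * half := by rw [hα, hH]
      _ = x * (Uu - Vv - half) := (mul_sub x _ _).symm
  have hYY' : ∀ i j : Fin 3, ∑ p, sv (t i p) * sv (t' p j) = (ed i j : KK A) :=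
    transfer t t' hinv₁
  have hY'Y : ∀ i j : Fin 3, ∑ p, sv (t' i p) * sv (t p j) = (ed i j : KK A) :=
    transfer t' t hinv₂
  have hkd : ∀ i j : Fin 3, (kd i j : KK A) = ed i j := fun _ _ => rfl
  simp only [hkd]
  exact abstract_iff (fun i j => su (t i j)) (fun k l => sv (t k l)) (fun k l => sv (t' k l))
    (Uu - Vv) (Uu - Vv - half) hα hβ hYY' hY'Y
end
end

section
/- In Y_R(so_3), the unitarity relation T(u)T^t(u+1/2) = 1 implies, in terms of the Gauss generators, that k₁(u)^{-1} = k_{-1}(u+1/2), that -e_{01}(u)k₁(u)^{-1} = k_{-1}(u+1/2)e_{-1,0}(u+1/2), that -k₁(u)^{-1}f_{10}(u) = f_{0,-1}(u+1/2)k_{-1}(u+1/2), and that k₀(u)^{-1} + e_{01}(u)k₁(u)^{-1}f_{10}(u) = k₀(u+1/2) + f_{0,-1}(u+1/2)k_{-1}(u+1/2)e_{-1,0}(u+1/2). -/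
noncomputable section

variable {A : Type} [Ring A]

variable (A) in
/-- The RTT Yangian `Y_R(so₃)`: the indices `-1, 0, 1` are encoded as `0, 1, 2 : Fin 3`,
so that the index `-i` corresponds to `Fin.rev`.  The data consists of the matrix
generator coefficients `t i j r` (with `t_{ij}(u) = ∑_r t_{ij}^{(r)} u^{-r}`,
`t_{ij}^{(0)} = δ_{ij}`) subject to the entrywise RTT relation (with denominators
`u-v`, `u-v-1/2` cleared) and the unitarity relation `T(u)Tᵗ(u+1/2) = Tᵗ(u+1/2)T(u) = 1`,
together with the Gauss generators `e`, `f`, `k` (and the inverses of the `k`'s)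
defined by the unique Gauss decomposition `T(u) = F(u)K(u)E(u)`. -/
structure YRso3 (A : Type) [Ring A] [Algebra ℚ A] where
  t : Fin 3 → Fin 3 → ℕ → A
  t_zero : ∀ i j, t i j 0 = if i = j then 1 else 0
  /-- `(u-v)(u-v-1/2)[t_{ij}(u),t_{kl}(v)] = (u-v-1/2)(t_{kj}(u)t_{il}(v)-t_{kj}(v)t_{il}(u))
      - (u-v)(δ_{k,-i} ∑_p t_{pj}(u)t_{-p,l}(v) - δ_{l,-j} ∑_p t_{k,-p}(v)t_{ip}(u))` -/
  rtt : ∀ i j k l : Fin 3,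
    (Uu - Vv) * (Uu - Vv - half) * (su (t i j) * sv (t k l) - sv (t k l) * su (t i j)) =
      (Uu - Vv - half) * (su (t k j) * sv (t i l) - sv (t k j) * su (t i l)) -
      (Uu - Vv) * (kd k i.rev * ∑ p : Fin 3, su (t p j) * sv (t p.rev l) -
                   kd l j.rev * ∑ p : Fin 3, sv (t k p.rev) * su (t i p))
  /-- `T(u)Tᵗ(u+1/2) = 1` -/
  unitary₁ : ∀ i j : Fin 3,
    ∑ p : Fin 3, su (t i p) * su (shPow (1/2) (t j.rev p.rev)) = kd i j
  /-- `Tᵗ(u+1/2)T(u) = 1` -/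
  unitary₂ : ∀ i j : Fin 3,
    ∑ p : Fin 3, su (shPow (1/2) (t p.rev i.rev)) * su (t p j) = kd i j
  -- Gauss generators: e₋₁,₀ e₀₁ e₋₁,₁ f₀,₋₁ f₁₀ f₁,₋₁ k₋₁ k₀ k₁ and the inverses k⁻¹
  e10 : ℕ → A
  e01 : ℕ → A
  e11 : ℕ → A
  f01 : ℕ → A
  f10 : ℕ → A
  f11 : ℕ → A
  km1 : ℕ → A
  k0 : ℕ → A
  k1 : ℕ → A
  km1' : ℕ → A
  k0' : ℕ → A
  k1' : ℕ → A
  e10_zero : e10 0 = 0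
  e01_zero : e01 0 = 0
  e11_zero : e11 0 = 0
  f01_zero : f01 0 = 0
  f10_zero : f10 0 = 0
  f11_zero : f11 0 = 0
  km1_zero : km1 0 = 1
  k0_zero : k0 0 = 1
  k1_zero : k1 0 = 1
  -- the Gauss decomposition T(u) = F(u)K(u)E(u), entrywise
  g11 : su (t 0 0) = su km1
  g12 : su (t 0 1) = su km1 * su e10
  g13 : su (t 0 2) = su km1 * su e11
  g21 : su (t 1 0) = su f01 * su km1
  g22 : su (t 1 1) = su k0 + su f01 * su km1 * su e10
  g23 : su (t 1 2) = su k0 * su e01 + su f01 * su km1 * su e11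
  g31 : su (t 2 0) = su f11 * su km1
  g32 : su (t 2 1) = su f10 * su k0 + su f11 * su km1 * su e10
  g33 : su (t 2 2) = su k1 + su f10 * su k0 * su e01 + su f11 * su km1 * su e11
  -- the inverses of the diagonal Gauss generators
  km1_inv₁ : su km1 * su km1' = 1
  km1_inv₂ : su km1' * su km1 = 1
  k0_inv₁ : su k0 * su k0' = 1
  k0_inv₂ : su k0' * su k0 = 1
  k1_inv₁ : su k1 * su k1' = 1
  k1_inv₂ : su k1' * su k1 = 1


/-! ### Auxiliary material for the proof of `stmt5` -/

section aux

open PowerSeries Finset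

/- distinct namespace to avoid clashes -/
namespace Stmt5Aux

/-- coefficients of `(1-X)^{-i}(1-X)^{-j} = (1-X)^{-(i+j)}` -/
lemma Jmul (i j : ℕ) :
    (invOneSubPow ℚ i).val * (invOneSubPow ℚ j).val = (invOneSubPow ℚ (i + j)).val := by
  rw [← Units.val_mul]
  congr 1
  rw [invOneSubPow_eq_inv_one_sub_pow, invOneSubPow_eq_inv_one_sub_pow,
    invOneSubPow_eq_inv_one_sub_pow, pow_add]

lemma coeffJ (r k : ℕ) :
    PowerSeries.coeff (R := ℚ) k (invOneSubPow ℚ r).val = ((r + k - 1).choose k : ℚ) := by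
  cases r with
  | zero =>
    rw [invOneSubPow_zero, Units.val_one, coeff_one]
    rcases Nat.eq_zero_or_pos k with hk | hk
    · simp [hk]
    · rw [if_neg (by omega), Nat.choose_eq_zero_of_lt (by omega)]
      simp
  | succ d =>
    rw [invOneSubPow_val_succ_eq_mk_add_choose, coeff_mk]
    have h1 : d + 1 + k - 1 = d + k := by omega
    rw [h1]
    have h2 : (d + k).choose d = (d + k).choose k := by
      have := Nat.choose_symm (n := d + k) (k := k) (by omega)
      rwa [show d + k - k = d by omega] at this
    rw [h2]

lemma L1 (i j n : ℕ) :
    ∑ s ∈ range (n + 1), ((i + s - 1).choose s : ℚ) * ((j + (n - s) - 1).choose (n - s) : ℚ)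
      = ((i + j + n - 1).choose n : ℚ) := by
  have h := congrArg (PowerSeries.coeff (R := ℚ) n) (Jmul i j)
  rw [PowerSeries.coeff_mul, Finset.Nat.sum_antidiagonal_eq_sum_range_succ_mk] at h
  simpa [coeffJ] using h

/-- scalar coefficients of the shift -/
def Qc (c : ℚ) (m r : ℕ) : ℚ := (-c) ^ (m - r) * ((m - 1).choose (m - r) : ℚ)

lemma L1' (c : ℚ) (i j n : ℕ) :
    ∑ s ∈ range (n + 1), Qc c (i + s) i * Qc c (j + (n - s)) j = Qc c (i + j + n) (i + j) := by
  unfold Qc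
  rw [show i + j + n - (i + j) = n by omega]
  calc ∑ s ∈ range (n + 1),
        (-c) ^ (i + s - i) * ((i + s - 1).choose (i + s - i) : ℚ) *
          ((-c) ^ (j + (n - s) - j) * ((j + (n - s) - 1).choose (j + (n - s) - j) : ℚ))
      = ∑ s ∈ range (n + 1), (-c) ^ n *
          (((i + s - 1).choose s : ℚ) * ((j + (n - s) - 1).choose (n - s) : ℚ)) := by
        refine Finset.sum_congr rfl fun s hs => ?_
        rw [Finset.mem_range] at hs
        rw [show i + s - i = s by omega, show j + (n - s) - j = n - s by omega]
        have hp : (-c) ^ s * (-c) ^ (n - s) = (-c) ^ n := by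
          rw [← pow_add]; congr 1; omega
        calc (-c) ^ s * ((i + s - 1).choose s : ℚ) *
              ((-c) ^ (n - s) * ((j + (n - s) - 1).choose (n - s) : ℚ))
            = ((-c) ^ s * (-c) ^ (n - s)) *
              (((i + s - 1).choose s : ℚ) * ((j + (n - s) - 1).choose (n - s) : ℚ)) := by ring
          _ = _ := by rw [hp]
    _ = (-c) ^ n * ((i + j + n - 1).choose n : ℚ) := by rw [← Finset.mul_sum, L1]

end Stmt5Aux

/-- Cauchy convolution of coefficient sequences -/
def conv (a b : ℕ → A) : ℕ → A := fun n => ∑ i ∈ range (n + 1), a i * b (n - i)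

lemma shPow_eq [Algebra ℚ A] (c : ℚ) (a : ℕ → A) (m : ℕ) :
    shPow c a m = ∑ r ∈ range (m + 1), algebraMap ℚ A (Stmt5Aux.Qc c m r) * a r := rfl

open Stmt5Aux in
lemma conv_shPow [Algebra ℚ A] (c : ℚ) (a b : ℕ → A) :
    shPow c (conv a b) = conv (shPow c a) (shPow c b) := by
  funext m
  have lhs1 : shPow c (conv a b) m =
      ∑ q ∈ (range (m + 1)).sigma (fun i => range (m - i + 1)),
        algebraMap ℚ A (Qc c m (q.1 + q.2)) * (a q.1 * b q.2) := by
    rw [shPow_eq]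
    unfold conv
    simp_rw [Finset.mul_sum]
    rw [Finset.sum_sigma']
    refine Finset.sum_nbij' (fun p => ⟨p.2, p.1 - p.2⟩) (fun q => ⟨q.1 + q.2, q.1⟩) ?_ ?_ ?_ ?_ ?_
    · rintro ⟨r, i⟩ hp
      simp only [Finset.mem_sigma, Finset.mem_range] at hp ⊢
      omega
    · rintro ⟨i, j⟩ hq
      simp only [Finset.mem_sigma, Finset.mem_range] at hq ⊢
      omega
    · rintro ⟨r, i⟩ hp
      simp only [Finset.mem_sigma, Finset.mem_range] at hp
      simp [show i + (r - i) = r by omega]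
    · rintro ⟨i, j⟩ hq
      simp only [Finset.mem_sigma, Finset.mem_range] at hq
      simp [show i + j - i = j by omega]
    · rintro ⟨r, i⟩ hp
      simp only [Finset.mem_sigma, Finset.mem_range] at hp
      simp only
      rw [show i + (r - i) = r by omega]
  have rhs1 : conv (shPow c a) (shPow c b) m =
      ∑ q ∈ (range (m + 1)).sigma (fun i => range (m - i + 1)),
        algebraMap ℚ A (Qc c m (q.1 + q.2)) * (a q.1 * b q.2) := by
    unfold conv
    simp_rw [shPow_eq, Finset.sum_mul, Finset.mul_sum]
    have step1 : ∀ k ∈ range (m + 1),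
        (∑ i ∈ range (k + 1), ∑ j ∈ range (m - k + 1),
          algebraMap ℚ A (Qc c k i) * a i * (algebraMap ℚ A (Qc c (m - k) j) * b j)) =
        ∑ p ∈ range (k + 1) ×ˢ range (m - k + 1),
          algebraMap ℚ A (Qc c k p.1) * a p.1 *
            (algebraMap ℚ A (Qc c (m - k) p.2) * b p.2) := by
      intro k _
      rw [Finset.sum_product]
    rw [Finset.sum_congr rfl step1, Finset.sum_sigma']
    have step2 :
        (∑ x ∈ (range (m + 1)).sigma (fun k => range (k + 1) ×ˢ range (m - k + 1)),
          algebraMap ℚ A (Qc c x.1 x.2.1) * a x.2.1 *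
            (algebraMap ℚ A (Qc c (m - x.1) x.2.2) * b x.2.2)) =
        ∑ y ∈ ((range (m + 1)).sigma (fun i => range (m - i + 1))).sigma
            (fun q => range (m - q.1 - q.2 + 1)),
          algebraMap ℚ A (Qc c (y.1.1 + y.2) y.1.1) * a y.1.1 *
            (algebraMap ℚ A (Qc c (m - y.1.1 - y.2) y.1.2) * b y.1.2) := by
      refine Finset.sum_nbij' (fun x => ⟨⟨x.2.1, x.2.2⟩, x.1 - x.2.1⟩)
        (fun y => ⟨y.1.1 + y.2, (y.1.1, y.1.2)⟩) ?_ ?_ ?_ ?_ ?_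
      · rintro ⟨k, i, j⟩ hx
        simp only [Finset.mem_sigma, Finset.mem_product, Finset.mem_range] at hx ⊢
        omega
      · rintro ⟨⟨i, j⟩, s⟩ hy
        simp only [Finset.mem_sigma, Finset.mem_product, Finset.mem_range] at hy ⊢
        omega
      · rintro ⟨k, i, j⟩ hx
        simp only [Finset.mem_sigma, Finset.mem_product, Finset.mem_range] at hx
        simp [show i + (k - i) = k by omega]
      · rintro ⟨⟨i, j⟩, s⟩ hy
        simp only [Finset.mem_sigma, Finset.mem_range] at hy
        simp [show i + s - i = s by omega]
      · rintro ⟨k, i, j⟩ hx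
        simp only [Finset.mem_sigma, Finset.mem_product, Finset.mem_range] at hx
        simp only
        rw [show i + (k - i) = k by omega, show m - i - (k - i) = m - k by omega]
    rw [step2, Finset.sum_sigma]
    refine Finset.sum_congr rfl ?_
    rintro ⟨i, j⟩ hq
    simp only [Finset.mem_sigma, Finset.mem_range] at hq
    have step3 : ∀ s ∈ range (m - i - j + 1),
        algebraMap ℚ A (Qc c (i + s) i) * a i *
          (algebraMap ℚ A (Qc c (m - i - s) j) * b j) =
        algebraMap ℚ A (Qc c (i + s) i * Qc c (j + (m - i - j - s)) j) * (a i * b j) := by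
      intro s hs
      rw [Finset.mem_range] at hs
      rw [show m - i - s = j + (m - i - j - s) by omega, map_mul,
        mul_assoc (algebraMap ℚ A (Qc c (i + s) i)) (a i), ← mul_assoc (a i),
        (Algebra.commutes (Qc c (j + (m - i - j - s)) j) (a i)).symm,
        mul_assoc (algebraMap ℚ A (Qc c (j + (m - i - j - s)) j)), ← mul_assoc]
    rw [Finset.sum_congr rfl step3, ← Finset.sum_mul, ← map_sum, L1',
      show i + j + (m - i - j) = m by omega]
  rw [lhs1, rhs1]

lemma shPow_add [Algebra ℚ A] (c : ℚ) (a b : ℕ → A) :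
    shPow c (fun n => a n + b n) = fun m => shPow c a m + shPow c b m := by
  funext m
  simp [shPow, mul_add, Finset.sum_add_distrib]

/-- the embedding `su` as a ring hom from power series -/
def SUh : PowerSeries A →+* KK A :=
  (HahnSeries.ofPowerSeries ℤ (HahnSeries ℤ A)).comp
    (PowerSeries.map (HahnSeries.C : A →+* HahnSeries ℤ A))

lemma su_eq_SUh (a : ℕ → A) : su a = SUh (PowerSeries.mk a) := by
  unfold su SUh
  simp only [RingHom.comp_apply]
  congr 1

lemma SUh_injective : Function.Injective (SUh : PowerSeries A →+* KK A) := by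
  intro x y h
  simp only [SUh, RingHom.comp_apply] at h
  have h2 := HahnSeries.ofPowerSeries_injective h
  refine PowerSeries.ext fun n => ?_
  apply HahnSeries.C_injective (Γ := ℤ)
  rw [← PowerSeries.coeff_map, ← PowerSeries.coeff_map, h2]

lemma su_inj {a b : ℕ → A} (h : su a = su b) : a = b := by
  rw [su_eq_SUh, su_eq_SUh] at h
  have h2 := SUh_injective h
  funext n
  have := congrArg (PowerSeries.coeff (R := A) n) h2
  simpa using this

lemma mk_conv (a b : ℕ → A) :
    PowerSeries.mk a * PowerSeries.mk b = PowerSeries.mk (conv a b) := by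
  ext n
  rw [PowerSeries.coeff_mul, Finset.Nat.sum_antidiagonal_eq_sum_range_succ_mk]
  simp [conv]

lemma su_mul (a b : ℕ → A) : su a * su b = su (conv a b) := by
  rw [su_eq_SUh, su_eq_SUh, su_eq_SUh, ← map_mul, mk_conv]

lemma su_add (a b : ℕ → A) : su a + su b = su (fun n => a n + b n) := by
  rw [su_eq_SUh, su_eq_SUh, su_eq_SUh, ← map_add]
  congr 1

section matrixpart
variable {R : Type} [Ring R]

lemma gauss_inv (e10 e01 e11 f01 f10 f11 km1 k0 k1 km1' k0' k1' : R)
    (hm1 : km1 * km1' = 1) (hm1' : km1' * km1 = 1)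
    (h0 : k0 * k0' = 1) (h0' : k0' * k0 = 1)
    (h1 : k1 * k1' = 1) (h1' : k1' * k1 = 1)
    (T S : Matrix (Fin 3) (Fin 3) R)
    (hT : T = !![km1, km1 * e10, km1 * e11;
                 f01 * km1, k0 + f01 * km1 * e10, k0 * e01 + f01 * km1 * e11;
                 f11 * km1, f10 * k0 + f11 * km1 * e10, k1 + f10 * k0 * e01 + f11 * km1 * e11])
    (hTS : T * S = 1) (hST : S * T = 1) :
    S 2 2 = k1' ∧ S 1 2 = -(e01 * k1') ∧ S 2 1 = -(k1' * f10) ∧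
      S 1 1 = k0' + e01 * k1' * f10 := by
  set F : Matrix (Fin 3) (Fin 3) R := !![1, 0, 0; f01, 1, 0; f11, f10, 1] with hF
  set K : Matrix (Fin 3) (Fin 3) R := !![km1, 0, 0; 0, k0, 0; 0, 0, k1] with hK
  set E : Matrix (Fin 3) (Fin 3) R := !![1, e10, e11; 0, 1, e01; 0, 0, 1] with hE
  set E' : Matrix (Fin 3) (Fin 3) R :=
    !![1, -e10, e10 * e01 - e11; 0, 1, -e01; 0, 0, 1] with hE'
  set K' : Matrix (Fin 3) (Fin 3) R := !![km1', 0, 0; 0, k0', 0; 0, 0, k1'] with hK'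
  set F' : Matrix (Fin 3) (Fin 3) R :=
    !![1, 0, 0; -f01, 1, 0; f10 * f01 - f11, -f10, 1] with hF'
  have hFKE : F * K * E = T := by
    rw [hT]
    ext i j
    fin_cases i <;> fin_cases j <;>
      simp [hF, hK, hE, Matrix.mul_apply, Fin.sum_univ_three, Matrix.vecHead,
        Matrix.vecTail] <;> noncomm_ring
  have hEE : E * E' = 1 := by
    ext i j
    fin_cases i <;> fin_cases j <;>
      simp [hE, hE', Matrix.mul_apply, Fin.sum_univ_three, Matrix.one_apply,
        Matrix.vecHead, Matrix.vecTail] <;> noncomm_ring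
  have hKK : K * K' = 1 := by
    ext i j
    fin_cases i <;> fin_cases j <;>
      simp [hK, hK', Matrix.mul_apply, Fin.sum_univ_three, Matrix.one_apply,
        Matrix.vecHead, Matrix.vecTail, hm1, h0, h1]
  have hFF : F * F' = 1 := by
    ext i j
    fin_cases i <;> fin_cases j <;>
      simp [hF, hF', Matrix.mul_apply, Fin.sum_univ_three, Matrix.one_apply,
        Matrix.vecHead, Matrix.vecTail] <;> noncomm_ring
  have hTM : T * (E' * (K' * F')) = 1 := by
    rw [← hFKE]
    have h2 : F * K * E * (E' * (K' * F')) = F * K * ((E * E') * (K' * F')) := by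
      simp only [Matrix.mul_assoc]
    rw [h2, hEE, Matrix.one_mul]
    have h3 : F * K * (K' * F') = F * ((K * K') * F') := by simp only [Matrix.mul_assoc]
    rw [h3, hKK, Matrix.one_mul, hFF]
  have hS : S = E' * (K' * F') := by
    calc S = S * (T * (E' * (K' * F'))) := by rw [hTM, Matrix.mul_one]
      _ = (S * T) * (E' * (K' * F')) := by rw [Matrix.mul_assoc]
      _ = E' * (K' * F') := by rw [hST, Matrix.one_mul]
  refine ⟨?_, ?_, ?_, ?_⟩ <;>
    · rw [hS]
      simp [hE', hK', hF', Matrix.mul_apply, Fin.sum_univ_three, Matrix.vecHead,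
        Matrix.vecTail]
      try noncomm_ring
end matrixpart

end aux

set_option maxHeartbeats 2000000 in
/-- consequences of unitarity in terms of Gauss generators:
`k₁(u)⁻¹ = k₋₁(u+1/2)`, `-e₀₁(u)k₁(u)⁻¹ = k₋₁(u+1/2)e₋₁,₀(u+1/2)`,
`-k₁(u)⁻¹f₁₀(u) = f₀,₋₁(u+1/2)k₋₁(u+1/2)` and
`k₀(u)⁻¹ + e₀₁(u)k₁(u)⁻¹f₁₀(u) = k₀(u+1/2) + f₀,₋₁(u+1/2)k₋₁(u+1/2)e₋₁,₀(u+1/2)`. -/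


theorem stmt5 (A : Type) [Ring A] [Algebra ℚ A] (Y : YRso3 A) :
    su Y.k1' = su (shPow (1/2) Y.km1) ∧
    -(su Y.e01 * su Y.k1') = su (shPow (1/2) Y.km1) * su (shPow (1/2) Y.e10) ∧
    -(su Y.k1' * su Y.f10) = su (shPow (1/2) Y.f01) * su (shPow (1/2) Y.km1) ∧
    su Y.k0' + su Y.e01 * su Y.k1' * su Y.f10 =
      su (shPow (1/2) Y.k0) +
        su (shPow (1/2) Y.f01) * su (shPow (1/2) Y.km1) * su (shPow (1/2) Y.e10) := by
  classical
  set Tm : Matrix (Fin 3) (Fin 3) (KK A) := Matrix.of fun i j => su (Y.t i j) with hTm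
  set Sm : Matrix (Fin 3) (Fin 3) (KK A) :=
    Matrix.of fun i j => su (shPow (1/2) (Y.t j.rev i.rev)) with hSm
  have hTS : Tm * Sm = 1 := by
    refine Matrix.ext fun i j => ?_
    rw [Matrix.mul_apply, Matrix.one_apply]
    simpa [hTm, hSm, kd] using Y.unitary₁ i j
  have hST : Sm * Tm = 1 := by
    refine Matrix.ext fun i j => ?_
    rw [Matrix.mul_apply, Matrix.one_apply]
    simpa [hTm, hSm, kd] using Y.unitary₂ i j
  have hT : Tm = !![su Y.km1, su Y.km1 * su Y.e10, su Y.km1 * su Y.e11;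
      su Y.f01 * su Y.km1, su Y.k0 + su Y.f01 * su Y.km1 * su Y.e10,
        su Y.k0 * su Y.e01 + su Y.f01 * su Y.km1 * su Y.e11;
      su Y.f11 * su Y.km1, su Y.f10 * su Y.k0 + su Y.f11 * su Y.km1 * su Y.e10,
        su Y.k1 + su Y.f10 * su Y.k0 * su Y.e01 + su Y.f11 * su Y.km1 * su Y.e11] := by
    refine Matrix.ext fun i j => ?_
    fin_cases i <;> fin_cases j <;>
      simp [hTm, Y.g11, Y.g12, Y.g13, Y.g21, Y.g22, Y.g23, Y.g31, Y.g32, Y.g33]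
  obtain ⟨h22, h12, h21, h11⟩ :=
    gauss_inv (su Y.e10) (su Y.e01) (su Y.e11) (su Y.f01) (su Y.f10) (su Y.f11)
      (su Y.km1) (su Y.k0) (su Y.k1) (su Y.km1') (su Y.k0') (su Y.k1')
      Y.km1_inv₁ Y.km1_inv₂ Y.k0_inv₁ Y.k0_inv₂ Y.k1_inv₁ Y.k1_inv₂ Tm Sm hT hTS hST
  have r1 : (1 : Fin 3).rev = 1 := by decide
  have r2 : (2 : Fin 3).rev = 0 := by decide
  have hS22 : Sm 2 2 = su (shPow (1/2) (Y.t 0 0)) := by rw [hSm]; simp [r2]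
  have hS12 : Sm 1 2 = su (shPow (1/2) (Y.t 0 1)) := by rw [hSm]; simp [r1, r2]
  have hS21 : Sm 2 1 = su (shPow (1/2) (Y.t 1 0)) := by rw [hSm]; simp [r1, r2]
  have hS11 : Sm 1 1 = su (shPow (1/2) (Y.t 1 1)) := by rw [hSm]; simp [r1]
  have ht00 : Y.t 0 0 = Y.km1 := su_inj Y.g11
  have ht01 : Y.t 0 1 = conv Y.km1 Y.e10 := su_inj (Y.g12.trans (su_mul _ _))
  have ht10 : Y.t 1 0 = conv Y.f01 Y.km1 := su_inj (Y.g21.trans (su_mul _ _))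
  have ht11 : Y.t 1 1 = fun n => Y.k0 n + conv (conv Y.f01 Y.km1) Y.e10 n := by
    refine su_inj (Y.g22.trans ?_)
    rw [su_mul, su_mul, su_add]
  refine ⟨?_, ?_, ?_, ?_⟩
  · rw [← h22, hS22, ht00]
  · rw [← h12, hS12, ht01, conv_shPow, ← su_mul]
  · rw [← h21, hS21, ht10, conv_shPow, ← su_mul]
  · rw [← h11, hS11, ht11, shPow_add, ← su_add]
    congr 1
    rw [conv_shPow, conv_shPow, ← su_mul, ← su_mul]
end
end

section
/- In Y_R(so_3), the Gauss generators satisfy [e_{-1,0}(u), f_{0,-1}(v)] = (k_{-1}(u)^{-1}k₀(u) - k_{-1}(v)^{-1}k₀(v))/(u-v) (as formal series, after clearing u-v). -/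
noncomputable section

variable {A : Type} [Ring A]

namespace Aux8

theorem singleOneComm {R : Type} [Ring R] (g : ℤ) (x : HahnSeries ℤ R) :
    HahnSeries.single g 1 * x = x * HahnSeries.single g 1 := by
  ext n
  have h1 : (HahnSeries.single g (1:R) * x).coeff ((n - g) + g) = 1 * x.coeff (n - g) :=
    HahnSeries.coeff_single_mul_add
  have h2 : (x * HahnSeries.single g (1:R)).coeff ((n - g) + g) = x.coeff (n - g) * 1 :=
    HahnSeries.coeff_mul_single_add
  rw [sub_add_cancel] at h1 h2
  rw [h1, h2, one_mul, mul_one]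

theorem CComm {R : Type} [Ring R] {r : R} (hr : ∀ s : R, r * s = s * r) (x : HahnSeries ℤ R) :
    HahnSeries.C r * x = x * HahnSeries.C r := by
  ext n
  rw [HahnSeries.C_apply, HahnSeries.coeff_single_zero_mul, HahnSeries.coeff_mul_single_zero, hr]

theorem regCancel0 {R : Type} [Ring R] [Nontrivial R] (c : R) {y : HahnSeries ℤ R}
    (h : (HahnSeries.single (-1 : ℤ) 1 - HahnSeries.C c) * y = 0) : y = 0 := by
  by_contra hy
  set X : HahnSeries ℤ R := HahnSeries.single (-1 : ℤ) 1 - HahnSeries.C c with hX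
  have hc1 : X.coeff (-1) = 1 := by
    rw [hX, HahnSeries.coeff_sub, HahnSeries.coeff_single_same, HahnSeries.C_apply,
      HahnSeries.coeff_single_of_ne (by norm_num), sub_zero]
  have hXne : X ≠ 0 := by
    intro h0
    rw [h0, HahnSeries.coeff_zero] at hc1
    exact zero_ne_one hc1
  have hlow : ∀ m : ℤ, m < -1 → X.coeff m = 0 := by
    intro m hm
    rw [hX, HahnSeries.coeff_sub, HahnSeries.coeff_single_of_ne (ne_of_lt hm),
      HahnSeries.C_apply, HahnSeries.coeff_single_of_ne (by omega), sub_zero]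
  have hord : X.order = -1 := by
    refine le_antisymm (HahnSeries.order_le_of_coeff_ne_zero ?_) (not_lt.mp ?_)
    · rw [hc1]; exact one_ne_zero
    · intro hlt
      exact mt HahnSeries.coeff_order_eq_zero.mp hXne (hlow _ hlt)
  have hlc : X.leadingCoeff = 1 := by
    have h1 : X.leadingCoeff = X.coeff X.order := by
      rw [HahnSeries.leadingCoeff_eq]
    rw [h1, hord, hc1]
  have hmain := HahnSeries.coeff_mul_order_add_order X y
  rw [h, HahnSeries.coeff_zero, hlc, one_mul] at hmain
  exact mt HahnSeries.leadingCoeff_eq_zero.mp hy hmain.symm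

theorem regCancel {R : Type} [Ring R] [Nontrivial R] (c : R) {y z : HahnSeries ℤ R}
    (h : (HahnSeries.single (-1 : ℤ) 1 - HahnSeries.C c) * y =
         (HahnSeries.single (-1 : ℤ) 1 - HahnSeries.C c) * z) : y = z := by
  have h0 : (HahnSeries.single (-1 : ℤ) 1 - HahnSeries.C c) * (y - z) = 0 := by
    rw [mul_sub, h, sub_self]
  exact sub_eq_zero.mp (regCancel0 c h0)

theorem conjComm {R : Type} [Ring R] {p q pi : R} (hpi1 : p * pi = 1) (hpi2 : pi * p = 1)
    (h : p * q = q * p) : pi * q = q * pi := by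
  linear_combination (norm := noncomm_ring) (-((pi*q)*hpi1)) - pi*h*pi + hpi2*(q*pi)

theorem akComm {R : Type} [Ring R] (D a b c a' b' c' d' x' k' : R)
    (hD : ∀ z : R, D * z = z * D)
    (hcD : ∀ y z : R, D * y = D * z → y = z)
    (hR2 : a * a' = a' * a)
    (hR3 : D * (a * c' - c' * a) = c * a' - c' * a)
    (hR5 : D * (a * d' - d' * a) = c * b' - c' * b)
    (hR6 : D * (a * b' - b' * a) = a * b' - a' * b)
    (ha'x' : a' * x' = 1) (hx'a' : x' * a' = 1)
    (hk' : k' = d' - c' * (x' * b')) :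
    a * k' = k' * a := by
  have hax' : a * x' = x' * a := (conjComm ha'x' hx'a' hR2.symm).symm
  have hQ1 : D*(a*(c'*(x'*b'))) = D*(c'*(x'*(a*b'))) + c*b' - c'*(x'*(a*b')) := by
    linear_combination (norm := noncomm_ring)
      hR3 * (x'*b') + D * (c' * hax' * b') + c * ha'x' * b' - c' * hax' * b'
  have hQ2 : D*(c'*(x'*(D*(a*b')))) = D*(D*(c'*(x'*(b'*a)))) + D*(c'*(x'*(a*b'))) - D*(c'*b) := by
    linear_combination (norm := noncomm_ring)
      D*(c'*(x'*hR6)) - D*(hD (c'*x'))*(b'*a) - D*(c'*hx'a'*b)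
  have hG2 : D*(D*(a*(d' - c'*(x'*b')))) = D*(D*((d' - c'*(x'*b'))*a)) := by
    linear_combination (norm := noncomm_ring)
      D*hR5 - D*hQ1 - hQ2 - D*(hD (c'*x'))*(a*b')
  rw [hk']
  exact hcD _ _ (hcD _ _ hG2)

theorem keyCalc {R : Type} [Ring R] (D a b c d a' b' c' d' x x' e f k k' : R)
    (hD : ∀ z : R, D * z = z * D)
    (hcD : ∀ y z : R, D * y = D * z → y = z)
    (hR1 : D * (b * c' - c' * b) = d * a' - d' * a)
    (hR2 : a * a' = a' * a)
    (hR3 : D * (a * c' - c' * a) = c * a' - c' * a)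
    (hR4 : D * (b * a' - a' * b) = b * a' - b' * a)
    (hax : a * x = 1) (hxa : x * a = 1) (ha'x' : a' * x' = 1) (hx'a' : x' * a' = 1)
    (hak' : a * k' = k' * a) (hvk : a' * k' = k' * a')
    (he : e = x * b) (hf : f = c' * x')
    (hk : k = d - c * (x * b)) (hk' : k' = d' - c' * (x' * b')) :
    D * (e * f - f * e) = x * k - x' * k' := by
  have hax' : a * x' = x' * a := (conjComm ha'x' hx'a' hR2.symm).symm
  have hxa' : x * a' = a' * x := conjComm hax hxa hR2
  have hxx' : x * x' = x' * x := conjComm hax hxa hax'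
  have hxk' : x * k' = k' * x := conjComm hax hxa hak'
  have hx'k' : x' * k' = k' * x' := conjComm ha'x' hx'a' hvk
  have hEF1 : D * ((x*b) * (c'*x')) = D * (x*(c'*b)*x') + x*d - x*(d'*(x'*a)) := by
    linear_combination (norm := noncomm_ring)
      hD x * (b*(c'*x')) + x*hR1*x' - hD x * ((c'*b)*x') + (x*d)*ha'x' - (x*d')*hax'
  have hR4' : D*(b*x') = D*(x'*b) - x'*b + x'*(b'*(x'*a)) := by
    linear_combination (norm := noncomm_ring)
      (-(x'*hR4*x')) - hD x' * ((b*a')*x') + hD x' * ((a'*b)*x')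
      + (D*(x'*b))*ha'x' - D*hx'a'*(b*x') - (x'*b)*ha'x' + (x'*b')*hax'
  have hA : D*(D*((x*b)*(c'*x'))) = D*(D*(x*((c'*b)*x'))) + D*(x*d) - D*(x*(d'*(x'*a))) := by
    linear_combination (norm := noncomm_ring) D * hEF1
  have hB : D*(D*(x*((c'*b)*x'))) = D*(x*(c'*(D*(b*x')))) := by
    linear_combination (norm := noncomm_ring) D * hD (x*c') * (b*x')
  have hC : D*(x*(c'*(D*(b*x')))) = D*(x*(c'*(D*(x'*b)))) - D*(x*(c'*(x'*b)))
      + D*(x*(c'*(x'*(b'*(x'*a))))) := by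
    linear_combination (norm := noncomm_ring) D*(x*(c'*hR4'))
  have hDd : D*(x*(c'*(D*(x'*b)))) = D*(D*(x*(c'*(x'*b)))) := by
    linear_combination (norm := noncomm_ring) (-(D * hD (x*c') * (x'*b)))
  have hP2 : D*(D*((x*b)*(c'*x'))) = D*(D*(x*(c'*(x'*b)))) - D*(x*(c'*(x'*b)))
      + D*(x*(c'*(x'*(b'*(x'*a))))) + D*(x*d) - D*(x*(d'*(x'*a))) := by
    linear_combination (norm := noncomm_ring) hA + hB + hC + hDd
  have hR3' : D*(c'*x) = D*(x*c') + x*(c*(x*a')) - x*c' := by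
    linear_combination (norm := noncomm_ring)
      x*hR3*x + hD x * ((a*c')*x) - hD x * ((c'*a)*x) - D*hxa*(c'*x)
      + (D*(x*c'))*hax - (x*c)*hxa' - (x*c')*hax
  have hFE : D*(D*((c'*x')*(x*b))) = D*(D*(x*(c'*(x'*b)))) + D*(x*(c*(x*b)))
      - D*(x*(c'*(x'*b))) := by
    linear_combination (norm := noncomm_ring)
      (-(D*(D*(c'*hxx'*b)))) + D*(hR3'*(x'*b)) + D*((x*(c*x))*ha'x'*b)
  apply hcD
  rw [he, hf]
  linear_combination (norm := noncomm_ring)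
    hP2 - hFE - D*(x*hk) + D*(x*hk'*(x'*a)) + D*hx'k' - D*(hxk'*(x'*a))
    - D*(k'*hxx'*a) - D*((k'*x')*hxa)

end Aux8

variable (A) in
/-- embedding of one-variable power series as `u`-series -/
def Phi8 : PowerSeries A →+* KK A :=
  (HahnSeries.ofPowerSeries ℤ (HahnSeries ℤ A)).comp
    (PowerSeries.map (HahnSeries.C : A →+* HahnSeries ℤ A))

variable (A) in
/-- embedding of one-variable power series as `v`-series -/
def Psi8 : PowerSeries A →+* KK A :=
  (HahnSeries.C : HahnSeries ℤ A →+* KK A).comp (HahnSeries.ofPowerSeries ℤ A)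

theorem su_eq8 (a : ℕ → A) : su a = Phi8 A (PowerSeries.mk a) := by
  have h : PowerSeries.map (HahnSeries.C : A →+* HahnSeries ℤ A) (PowerSeries.mk a) =
      PowerSeries.mk fun n => HahnSeries.C (a n) := by
    ext n
    simp [PowerSeries.coeff_map]
  simp only [su, Phi8, RingHom.comp_apply, h]

theorem sv_eq8 (a : ℕ → A) : sv a = Psi8 A (PowerSeries.mk a) := rfl

theorem Phi8_inj : Function.Injective (Phi8 A) := by
  intro p q h
  ext n
  have h2 := congrArg (fun z : KK A => z.coeff (n : ℤ)) h
  simp only [Phi8, RingHom.comp_apply, HahnSeries.ofPowerSeries_apply_coeff,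
    PowerSeries.coeff_map] at h2
  exact HahnSeries.C_injective h2

namespace Aux8

theorem rttClean {R : Type} [Ring R] {D H Z W s1 s2 : R}
    (hHm : H * D = D * H)
    (hcH : ∀ y z : R, H * y = H * z → y = z)
    (h : D * H * Z = H * W - D * ((0 : R) * s1 - 0 * s2)) : D * Z = W := by
  rw [zero_mul, zero_mul, sub_zero, mul_zero, sub_zero] at h
  apply hcH
  rw [← mul_assoc, hHm]
  exact h

theorem rtt2Clean {R : Type} [Ring R] {D H Z s1 s2 : R}
    (hHm : H * D = D * H)
    (hcH : ∀ y z : R, H * y = H * z → y = z)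
    (hc1 : ∀ y : R, (D - 1) * y = 0 → y = 0)
    (h : D * H * Z = H * Z - D * ((0 : R) * s1 - 0 * s2)) : Z = 0 := by
  have h' : D * Z = Z := rttClean hHm hcH h
  apply hc1
  rw [sub_mul, one_mul, h', sub_self]

end Aux8
/-- `(u-v)[e₋₁,₀(u), f₀,₋₁(v)] = k₋₁(u)⁻¹k₀(u) - k₋₁(v)⁻¹k₀(v)`. -/
theorem stmt8 (A : Type) [Ring A] [Algebra ℚ A] (Y : YRso3 A) :
    (Uu - Vv) * (su Y.e10 * sv Y.f01 - sv Y.f01 * su Y.e10) =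
      su Y.km1' * su Y.k0 - sv Y.km1' * sv Y.k0 := by
  rcases subsingleton_or_nontrivial A with hA | hA
  · haveI : Subsingleton (HahnSeries ℤ A) := ⟨fun x y => by ext g; exact Subsingleton.elim _ _⟩
    haveI : Subsingleton (KK A) := ⟨fun x y => by ext g; exact Subsingleton.elim _ _⟩
    exact Subsingleton.elim _ _
  haveI : Nontrivial (HahnSeries ℤ A) := inferInstance
  -- centrality
  have hUc : ∀ z : KK A, Uu * z = z * Uu := fun z => Aux8.singleOneComm (-1) z
  have hVin : ∀ s : HahnSeries ℤ A,
      HahnSeries.single (-1 : ℤ) (1 : A) * s = s * HahnSeries.single (-1 : ℤ) 1 :=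
    fun s => Aux8.singleOneComm (-1) s
  have hVc : ∀ z : KK A, Vv * z = z * Vv := fun z => Aux8.CComm hVin z
  have hhin : ∀ s : HahnSeries ℤ A, HahnSeries.C (algebraMap ℚ A (1/2)) * s =
      s * HahnSeries.C (algebraMap ℚ A (1/2)) :=
    fun s => Aux8.CComm (fun t => Algebra.commutes _ t) s
  have hHc : ∀ z : KK A, half * z = z * half := fun z => Aux8.CComm hhin z
  have hD : ∀ z : KK A, (Uu - Vv) * z = z * (Uu - Vv) := fun z => by
    rw [sub_mul Uu Vv z, mul_sub z Uu Vv, hUc z, hVc z]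
  have hHm : ∀ z : KK A, (Uu - Vv - half) * z = z * (Uu - Vv - half) := fun z => by
    rw [sub_mul (Uu - Vv) half z, mul_sub z (Uu - Vv) half, hD z, hHc z]
  -- cancellation
  have cancelD : ∀ y z : KK A, (Uu - Vv) * y = (Uu - Vv) * z → y = z := fun y z h =>
    Aux8.regCancel (HahnSeries.single (-1) 1) h
  have hHmeq : (Uu - Vv - half : KK A) = HahnSeries.single (-1 : ℤ) (1 : HahnSeries ℤ A) -
      HahnSeries.C (HahnSeries.single (-1 : ℤ) (1 : A) + HahnSeries.C (algebraMap ℚ A (1/2))) := by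
    have h1 : (Uu - Vv - half : KK A) = Uu - (Vv + half) := by exact sub_sub (Uu : KK A) Vv half
    have h2 : (Vv + half : KK A) = HahnSeries.C (HahnSeries.single (-1 : ℤ) (1 : A) +
        HahnSeries.C (algebraMap ℚ A (1/2))) := (map_add _ _ _).symm
    rw [h1, h2]
    rfl
  have cancelHm : ∀ y z : KK A, (Uu - Vv - half) * y = (Uu - Vv - half) * z → y = z :=
    fun y z h => Aux8.regCancel _ (by rw [hHmeq] at h; exact h)
  have hD1eq : (Uu - Vv - 1 : KK A) = HahnSeries.single (-1 : ℤ) (1 : HahnSeries ℤ A) -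
      HahnSeries.C (HahnSeries.single (-1 : ℤ) (1 : A) + 1) := by
    have h1 : (Uu - Vv - 1 : KK A) = Uu - (Vv + 1) := by exact sub_sub (Uu : KK A) Vv 1
    have h2 : (Vv + 1 : KK A) = HahnSeries.C (HahnSeries.single (-1 : ℤ) (1 : A) +
        (1 : HahnSeries ℤ A)) := by
      have h3 : (HahnSeries.C (HahnSeries.single (-1 : ℤ) (1 : A) + (1 : HahnSeries ℤ A)) : KK A)
          = HahnSeries.C (HahnSeries.single (-1 : ℤ) (1 : A)) + HahnSeries.C (1 : HahnSeries ℤ A) :=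
        map_add _ _ _
      have h4 : (HahnSeries.C (1 : HahnSeries ℤ A) : KK A) = 1 := map_one _
      rw [h3, h4]
      rfl
    rw [h1, h2]
    rfl
  have hc1 : ∀ y : KK A, (Uu - Vv - 1) * y = 0 → y = 0 := fun y h0 =>
    Aux8.regCancel0 _ (by rw [hD1eq] at h0; exact h0)
  -- RTT commutation relations without Q-terms
  have rtt' : ∀ i j kk l : Fin 3, kk ≠ i.rev → l ≠ j.rev →
      (Uu - Vv) * (su (Y.t i j) * sv (Y.t kk l) - sv (Y.t kk l) * su (Y.t i j)) =
        su (Y.t kk j) * sv (Y.t i l) - sv (Y.t kk j) * su (Y.t i l) := by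
    intro i j kk l h1 h2
    have h := Y.rtt i j kk l
    rw [show kd (A := A) kk i.rev = (0 : KK A) from by simp only [kd]; exact if_neg h1,
      show kd (A := A) l j.rev = (0 : KK A) from by simp only [kd]; exact if_neg h2] at h
    exact Aux8.rttClean (R := KK A) (hHm (Uu - Vv)) cancelHm (by exact h)
  have hR1c := rtt' 0 1 1 0 (by decide) (by decide)
  have hR3c := rtt' 0 0 1 0 (by decide) (by decide)
  have hR4c := rtt' 0 1 0 0 (by decide) (by decide)
  have hR5c := rtt' 0 0 1 1 (by decide) (by decide)
  have hR6c := rtt' 0 0 0 1 (by decide) (by decide)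
  -- the relation [a(u), a(v)] = 0
  have hR2c : su (Y.t 0 0) * sv (Y.t 0 0) = sv (Y.t 0 0) * su (Y.t 0 0) := by
    have h := Y.rtt 0 0 0 0
    rw [show kd (A := A) (0 : Fin 3) ((0 : Fin 3)).rev = (0 : KK A) from by
        simp only [kd]; exact if_neg (by decide)] at h
    exact sub_eq_zero.mp (Aux8.rtt2Clean (R := KK A) (hHm (Uu - Vv)) cancelHm hc1 (by exact h))
  -- transfer the Gauss relations to the `v` variable
  have hva : sv (Y.t 0 0) = sv Y.km1 := by
    have h := Y.g11
    rw [su_eq8, su_eq8] at h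
    rw [sv_eq8, sv_eq8, Phi8_inj h]
  have hvb : sv (Y.t 0 1) = sv Y.km1 * sv Y.e10 := by
    have h := Y.g12
    rw [su_eq8, su_eq8, su_eq8, ← map_mul] at h
    rw [sv_eq8, sv_eq8, sv_eq8, ← map_mul, Phi8_inj h]
  have hvc : sv (Y.t 1 0) = sv Y.f01 * sv Y.km1 := by
    have h := Y.g21
    rw [su_eq8, su_eq8, su_eq8, ← map_mul] at h
    rw [sv_eq8, sv_eq8, sv_eq8, ← map_mul, Phi8_inj h]
  have hvd : sv (Y.t 1 1) = sv Y.k0 + sv Y.f01 * sv Y.km1 * sv Y.e10 := by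
    have h := Y.g22
    rw [su_eq8, su_eq8, su_eq8, su_eq8, su_eq8, ← map_mul, ← map_mul, ← map_add] at h
    rw [sv_eq8, sv_eq8, sv_eq8, sv_eq8, sv_eq8, ← map_mul, ← map_mul, ← map_add, Phi8_inj h]
  have hvax : sv Y.km1 * sv Y.km1' = 1 := by
    have h := Y.km1_inv₁
    rw [su_eq8, su_eq8, ← map_mul, show (1 : KK A) = Phi8 A 1 from (map_one _).symm] at h
    rw [sv_eq8, sv_eq8, ← map_mul, Phi8_inj h, map_one]
  have hvxa : sv Y.km1' * sv Y.km1 = 1 := by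
    have h := Y.km1_inv₂
    rw [su_eq8, su_eq8, ← map_mul, show (1 : KK A) = Phi8 A 1 from (map_one _).symm] at h
    rw [sv_eq8, sv_eq8, ← map_mul, Phi8_inj h, map_one]
  -- inverse relations in concrete form
  have haxc : su (Y.t 0 0) * su Y.km1' = 1 := by rw [Y.g11]; exact Y.km1_inv₁
  have hxac : su Y.km1' * su (Y.t 0 0) = 1 := by rw [Y.g11]; exact Y.km1_inv₂
  have ha'x'c : sv (Y.t 0 0) * sv Y.km1' = 1 := by rw [hva]; exact hvax
  have hx'a'c : sv Y.km1' * sv (Y.t 0 0) = 1 := by rw [hva]; exact hvxa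
  -- Gauss generator identities
  have heC : su Y.e10 = su Y.km1' * su (Y.t 0 1) := by
    rw [Y.g12, ← mul_assoc (su Y.km1') (su Y.km1) (su Y.e10), Y.km1_inv₂, one_mul (su Y.e10)]
  have hfC : sv Y.f01 = sv (Y.t 1 0) * sv Y.km1' := by
    rw [hvc, mul_assoc (sv Y.f01) (sv Y.km1) (sv Y.km1'), hvax, mul_one (sv Y.f01)]
  have hkc : su Y.k0 = su (Y.t 1 1) - su (Y.t 1 0) * (su Y.km1' * su (Y.t 0 1)) := by
    rw [Y.g22, Y.g21, heC.symm]
    exact (add_sub_cancel_right (su Y.k0) (su Y.f01 * su Y.km1 * su Y.e10)).symm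
  have hk'c : sv Y.k0 = sv (Y.t 1 1) - sv (Y.t 1 0) * (sv Y.km1' * sv (Y.t 0 1)) := by
    have hmid : sv Y.km1' * sv (Y.t 0 1) = sv Y.e10 := by
      rw [hvb, ← mul_assoc (sv Y.km1') (sv Y.km1) (sv Y.e10), hvxa, one_mul (sv Y.e10)]
    rw [hvd, hvc, hmid]
    exact (add_sub_cancel_right (sv Y.k0) (sv Y.f01 * sv Y.km1 * sv Y.e10)).symm
  -- the commutation [k₋₁(u), k₀(v)] = 0
  have hak'c : su (Y.t 0 0) * sv Y.k0 = sv Y.k0 * su (Y.t 0 0) :=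
    Aux8.akComm (R := KK A) (Uu - Vv) (su (Y.t 0 0)) (su (Y.t 0 1)) (su (Y.t 1 0)) (sv (Y.t 0 0))
      (sv (Y.t 0 1)) (sv (Y.t 1 0)) (sv (Y.t 1 1)) (sv Y.km1') (sv Y.k0)
      hD cancelD hR2c hR3c hR5c hR6c ha'x'c hx'a'c hk'c
  -- coefficientwise commutation, transferred to `[k₋₁(v), k₀(v)] = 0`
  have hkm : su Y.km1 * sv Y.k0 = sv Y.k0 * su Y.km1 := by
    have h := hak'c
    rw [Y.g11] at h
    exact h
  have hsc : ∀ n : ℕ, (su Y.km1).coeff (n : ℤ) = HahnSeries.C (Y.km1 n) := by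
    intro n
    simp only [su]
    rw [HahnSeries.ofPowerSeries_apply_coeff, PowerSeries.coeff_mk]
  have hqc : ∀ m : ℕ, (HahnSeries.ofPowerSeries ℤ A (PowerSeries.mk Y.k0)).coeff (m : ℤ) =
      Y.k0 m := by
    intro m
    rw [HahnSeries.ofPowerSeries_apply_coeff, PowerSeries.coeff_mk]
  have hext : ∀ n m : ℕ, Y.km1 n * Y.k0 m = Y.k0 m * Y.km1 n := by
    intro n m
    have h1 := congrArg (fun z : KK A => z.coeff (n : ℤ)) hkm
    rw [show sv Y.k0 = HahnSeries.C (HahnSeries.ofPowerSeries ℤ A (PowerSeries.mk Y.k0))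
        from rfl, HahnSeries.C_apply, HahnSeries.coeff_mul_single_zero,
      HahnSeries.coeff_single_zero_mul, hsc n] at h1
    have h2 := congrArg (fun z : HahnSeries ℤ A => z.coeff (m : ℤ)) h1
    rw [HahnSeries.C_apply, HahnSeries.coeff_single_zero_mul,
      HahnSeries.coeff_mul_single_zero, hqc m] at h2
    exact h2
  have hps : (PowerSeries.mk Y.km1) * (PowerSeries.mk Y.k0) =
      (PowerSeries.mk Y.k0) * (PowerSeries.mk Y.km1) := by
    ext n
    rw [PowerSeries.coeff_mul, PowerSeries.coeff_mul, ← Finset.Nat.sum_antidiagonal_swap]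
    refine Finset.sum_congr rfl fun p hp => ?_
    simp only [Prod.fst_swap, Prod.snd_swap, PowerSeries.coeff_mk]
    exact hext p.2 p.1
  have hvkm : sv Y.km1 * sv Y.k0 = sv Y.k0 * sv Y.km1 := by
    rw [sv_eq8, sv_eq8, ← map_mul, ← map_mul, hps]
  have hvkc : sv (Y.t 0 0) * sv Y.k0 = sv Y.k0 * sv (Y.t 0 0) := by
    rw [hva]; exact hvkm
  -- final assembly
  exact Aux8.keyCalc (R := KK A) (Uu - Vv) (su (Y.t 0 0)) (su (Y.t 0 1)) (su (Y.t 1 0)) (su (Y.t 1 1))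
    (sv (Y.t 0 0)) (sv (Y.t 0 1)) (sv (Y.t 1 0)) (sv (Y.t 1 1)) (su Y.km1') (sv Y.km1')
    (su Y.e10) (sv Y.f01) (su Y.k0) (sv Y.k0)
    hD cancelD hR1c hR2c hR3c hR4c haxc hxac ha'x'c hx'a'c hak'c hvkc heC hfC hkc hk'c
end
end

section
/- In Y_R(so_3), the commutator of the -1-row generators satisfies [t_{-1,0}(u), t_{-1,0}(v)] = t_{-1,-1}(u)t_{-1,1}(v) + (1/(u-v-1))t_{-1,-1}(v)t_{-1,1}(u) - ((u-v)/(u-v-1))t_{-1,1}(v)t_{-1,-1}(u), as an identity of formal series after clearing the denominator u-v-1. -/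
noncomputable section

variable {A : Type} [Ring A]

section aux

open HahnSeries

/-- generic ring computation lemmas (proved in an arbitrary ring, where tactic
pattern-matching works, then applied to `KK A` by elaboration) -/
lemma gen_sub {R : Type} [Ring R] (x z : R) (h : (1 - x) * z = 0) : z = x * z := by
  have h' : z - x * z = 0 := by rw [← h]; noncomm_ring
  exact sub_eq_zero.mp h'

lemma gen_assoc0 {R : Type} [Ring R] (s a z y : R) (hk : s * a = y) (h : a * z = 0) :
    y * z = 0 := by rw [← hk, mul_assoc, h, mul_zero]

lemma gen_key {R : Type} [Ring R] (s u v h x : R) (h1 : s * u = 1)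
    (h2 : s * v + s * h = x) : s * (u - v - h) = 1 - x := by
  rw [mul_sub, mul_sub, h1, ← h2]; noncomm_ring

lemma gen_comm_sub {R : Type} [Ring R] (h u v : R) (h1 : h * u = u * h)
    (h2 : h * v = v * h) : h * (u - v) = (u - v) * h := by
  rw [mul_sub, sub_mul, h1, h2]

lemma gen_comm {R : Type} [Ring R] (m h : R) (hc : h * m = m * h) :
    (m - h) * m = m * (m - h) := by
  rw [sub_mul, mul_sub, hc]

lemma gen_L1 {R : Type} [Ring R] (u a C D X S1 S2 S : R)
    (e1 : u * a * C = a * C - u * (0 * S1 - 1 * S))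
    (e2 : u * a * D = a * X - u * (0 * S2 - 1 * S))
    (hcomm : a * u = u * a) :
    a * (u * (C - D) - (C - X)) = 0 := by
  have h : a * (u * (C - D) - (C - X)) =
      (u * a * C - (a * C - u * (0 * S1 - 1 * S))) -
        (u * a * D - (a * X - u * (0 * S2 - 1 * S))) + (a * u - u * a) * (C - D) := by
    noncomm_ring
  rw [h, e1, e2, hcomm]; noncomm_ring

lemma gen_L2 {R : Type} [Ring R] (u C P Q T : R)
    (hkey : u * (C - (P - T)) - (C - (P - Q)) = 0) :
    (u - 1) * C = (u - 1) * P + Q - u * T := by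
  rw [← sub_eq_zero]
  have h : (u - 1) * C - ((u - 1) * P + Q - u * T) =
      u * (C - (P - T)) - (C - (P - Q)) := by noncomm_ring
  exact h.trans hkey

/-- `1 - single 1 r` is left-regular in `HahnSeries ℤ R`. -/
lemma aux_single_cancel {R : Type} [Ring R] (r : R) (Z : HahnSeries ℤ R)
    (h : (1 - HahnSeries.single (1 : ℤ) r) * Z = 0) : Z = 0 := by
  by_contra hZ
  have hxz : Z = HahnSeries.single (1 : ℤ) r * Z := gen_sub _ _ h
  have h1 : Z.coeff Z.order ≠ 0 := mt HahnSeries.coeff_order_eq_zero.mp hZ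
  have ho : Z.order = (Z.order - 1) + 1 := by ring
  apply h1
  calc Z.coeff Z.order = Z.coeff (Z.order - 1 + 1) := congrArg _ ho
    _ = (HahnSeries.single (1 : ℤ) r * Z).coeff (Z.order - 1 + 1) := by rw [← hxz]
    _ = r * Z.coeff (Z.order - 1) := HahnSeries.coeff_single_mul_add
    _ = r * 0 := by rw [HahnSeries.coeff_eq_zero_of_lt_order (by omega)]
    _ = 0 := mul_zero r

variable {A : Type} [Ring A] [Algebra ℚ A]

lemma aux_cancel (Z : KK A) (h : (Uu - Vv - half) * Z = 0) : Z = 0 := by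
  set w : HahnSeries ℤ A := HahnSeries.single (-1 : ℤ) 1 with hw
  set c : HahnSeries ℤ A := HahnSeries.C (algebraMap ℚ A (1/2)) with hc
  have p1 : HahnSeries.single (1 : ℤ) (1 : HahnSeries ℤ A) * (Uu : KK A) = 1 := by
    calc HahnSeries.single (1 : ℤ) (1 : HahnSeries ℤ A) * (Uu : KK A)
        = HahnSeries.single ((1 : ℤ) + -1) ((1 : HahnSeries ℤ A) * 1) :=
          HahnSeries.single_mul_single
      _ = HahnSeries.single (0 : ℤ) (1 : HahnSeries ℤ A) := by norm_num
      _ = 1 := HahnSeries.single_zero_one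
  have q1 : HahnSeries.single (1 : ℤ) (1 : HahnSeries ℤ A) * (Vv : KK A) =
      HahnSeries.single (1 : ℤ) w := by
    calc HahnSeries.single (1 : ℤ) (1 : HahnSeries ℤ A) * (Vv : KK A)
        = HahnSeries.single ((1 : ℤ) + 0) ((1 : HahnSeries ℤ A) * w) :=
          HahnSeries.single_mul_single
      _ = HahnSeries.single (1 : ℤ) w := by norm_num
  have q2 : HahnSeries.single (1 : ℤ) (1 : HahnSeries ℤ A) * (half : KK A) =
      HahnSeries.single (1 : ℤ) c := by
    calc HahnSeries.single (1 : ℤ) (1 : HahnSeries ℤ A) * (half : KK A)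
        = HahnSeries.single ((1 : ℤ) + 0) ((1 : HahnSeries ℤ A) * c) :=
          HahnSeries.single_mul_single
      _ = HahnSeries.single (1 : ℤ) c := by norm_num
  have p2 : HahnSeries.single (1 : ℤ) (1 : HahnSeries ℤ A) * (Vv : KK A) +
      HahnSeries.single (1 : ℤ) (1 : HahnSeries ℤ A) * (half : KK A) =
      HahnSeries.single (1 : ℤ) (w + c) := by
    rw [q1, q2]
    exact (map_add (HahnSeries.single.addMonoidHom (1 : ℤ)) w c).symm
  have key : HahnSeries.single (1 : ℤ) (1 : HahnSeries ℤ A) * (Uu - Vv - half : KK A)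
      = 1 - HahnSeries.single (1 : ℤ) (w + c) := gen_key _ _ _ _ _ p1 p2
  apply aux_single_cancel (w + c)
  exact gen_assoc0 (R := KK A) _ _ _ _ key h

lemma aux_comm : ((Uu - Vv - half : KK A)) * (Uu - Vv) = (Uu - Vv) * (Uu - Vv - half) := by
  have h1 : (half : KK A) * Uu = Uu * half := by
    calc (half : KK A) * Uu
        = HahnSeries.single ((0 : ℤ) + -1)
            ((HahnSeries.C (algebraMap ℚ A (1/2))) * 1) := HahnSeries.single_mul_single
      _ = HahnSeries.single (-1 : ℤ) (HahnSeries.C (algebraMap ℚ A (1/2))) := by norm_num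
      _ = HahnSeries.single ((-1 : ℤ) + 0)
            ((1 : HahnSeries ℤ A) * HahnSeries.C (algebraMap ℚ A (1/2))) := by norm_num
      _ = Uu * half := HahnSeries.single_mul_single.symm
  have hcw : (HahnSeries.C (algebraMap ℚ A (1/2)) : HahnSeries ℤ A) *
      HahnSeries.single (-1 : ℤ) (1 : A) =
      HahnSeries.single (-1 : ℤ) (1 : A) * HahnSeries.C (algebraMap ℚ A (1/2)) := by
    calc (HahnSeries.C (algebraMap ℚ A (1/2)) : HahnSeries ℤ A) *
        HahnSeries.single (-1 : ℤ) (1 : A)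
        = HahnSeries.single ((0 : ℤ) + -1) ((algebraMap ℚ A (1/2)) * 1) :=
          HahnSeries.single_mul_single
      _ = HahnSeries.single ((-1 : ℤ) + 0) ((1 : A) * algebraMap ℚ A (1/2)) := by norm_num
      _ = HahnSeries.single (-1 : ℤ) (1 : A) * HahnSeries.C (algebraMap ℚ A (1/2)) :=
          HahnSeries.single_mul_single.symm
  have h2 : (half : KK A) * Vv = Vv * half := by
    calc (half : KK A) * Vv
        = HahnSeries.single ((0 : ℤ) + 0)
            ((HahnSeries.C (algebraMap ℚ A (1/2))) * HahnSeries.single (-1 : ℤ) (1 : A)) :=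
          HahnSeries.single_mul_single
      _ = HahnSeries.single ((0 : ℤ) + 0)
            (HahnSeries.single (-1 : ℤ) (1 : A) * HahnSeries.C (algebraMap ℚ A (1/2))) := by
          rw [hcw]
      _ = Vv * half := HahnSeries.single_mul_single.symm
  exact gen_comm _ _ (gen_comm_sub _ _ _ h1 h2)

end aux

/-- `(u-v-1)[t₋₁,₀(u), t₋₁,₀(v)] = (u-v-1)t₋₁,₋₁(u)t₋₁,₁(v)
+ t₋₁,₋₁(v)t₋₁,₁(u) - (u-v)t₋₁,₁(v)t₋₁,₋₁(u)`.  (Indices `-1,0,1` are `0,1,2 : Fin 3`.) -/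
theorem stmt19 (A : Type) [Ring A] [Algebra ℚ A] (Y : YRso3 A) :
    (Uu - Vv - 1) * (su (Y.t 0 1) * sv (Y.t 0 1) - sv (Y.t 0 1) * su (Y.t 0 1)) =
      (Uu - Vv - 1) * (su (Y.t 0 0) * sv (Y.t 0 2)) +
        sv (Y.t 0 0) * su (Y.t 0 2) -
        (Uu - Vv) * (sv (Y.t 0 2) * su (Y.t 0 0)) := by
  have e1 := Y.rtt 0 1 0 1
  have e2 := Y.rtt 0 0 0 2
  have k1 : (kd (0 : Fin 3) ((0 : Fin 3).rev) : KK A) = 0 := rfl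
  have k2 : (kd (1 : Fin 3) ((1 : Fin 3).rev) : KK A) = 1 := rfl
  have k3 : (kd (2 : Fin 3) ((0 : Fin 3).rev) : KK A) = 1 := rfl
  rw [k1, k2] at e1
  rw [k1, k3] at e2
  have key0 := gen_L1 (R := KK A) _ _ _ _ _ _ _ _ e1 e2 aux_comm
  have key := aux_cancel _ key0
  exact gen_L2 (R := KK A) _ _ _ _ _ key
end
end
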